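/- Deterministic limit: fix n > 0 and a positive continuous N_det on a compact surface ∂Ω with area measure dA, and let N_min = min_{x∈∂Ω} N_det(x). Then as m → ∞, the failure probability F_N^{(m)}(n) = 1 - exp(-(n^m)∫_{∂Ω} N_det^{-m} dA) tends to 0 if n < N_min and to 1 if n > N_min. -/

import Mathlib

open MeasureTheory Filter

lemma aux_rpow_tendsto_atTop {b : ℝ} (hb : 1 < b) :
    Tendsto (fun m : ℝ => b ^ m) atTop atTop := by
  have hb0 : 0 < b := lt_trans one_pos hb
  simp_rw [Real.rpow_def_of_pos hb0]
  exact Real.tendsto_exp_atTop.comp <|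
    Tendsto.const_mul_atTop (Real.log_pos hb) tendsto_id

/-- Deterministic limit: on a compact surface with positive continuous `N_det`, minimum
value `N_min = N_det x₀`, and area measure giving positive mass to every neighborhood of
the minimizer `x₀`, the failure probability
`F_N^{(m)}(n) = 1 - exp (-n^m ∫ N_det^{-m} dA)` tends, as the Weibull shape `m → ∞`,
to `0` if `n < N_min` and to `1` if `n > N_min`. -/
theorem deterministic_limit
    {X : Type*} [MetricSpace X] [CompactSpace X] [Nonempty X]
    [MeasurableSpace X] [BorelSpace X]
    (μ : Measure X) [IsFiniteMeasure μ]
    (Ndet : X → ℝ) (hcont : Continuous Ndet) (hpos : ∀ x, 0 < Ndet x)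
    (x₀ : X) (hmin : ∀ x, Ndet x₀ ≤ Ndet x)
    (hμ : ∀ ε : ℝ, 0 < ε → 0 < μ (Metric.ball x₀ ε))
    (n : ℝ) (hn : 0 < n) :
    (n < Ndet x₀ →
      Tendsto (fun m : ℝ => 1 - Real.exp (-(n ^ m * ∫ x, Ndet x ^ (-m) ∂μ)))
        atTop (nhds 0)) ∧
    (Ndet x₀ < n →
      Tendsto (fun m : ℝ => 1 - Real.exp (-(n ^ m * ∫ x, Ndet x ^ (-m) ∂μ)))
        atTop (nhds 1)) := by
  set g : ℝ → ℝ := fun m => n ^ m * ∫ x, Ndet x ^ (-m) ∂μ with hg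
  -- integrability of the integrand for each m
  have hint : ∀ m : ℝ, Integrable (fun x => Ndet x ^ (-m)) μ := by
    intro m
    have hc : Continuous fun x => Ndet x ^ (-m) :=
      hcont.rpow_const (fun x => Or.inl (hpos x).ne')
    have := hc.continuousOn.integrableOn_compact (isCompact_univ (X := X)) (μ := μ)
    rwa [integrableOn_univ] at this
  -- rewrite g m as ∫ (n / Ndet x) ^ m
  have hgeq : ∀ m : ℝ, g m = ∫ x, (n / Ndet x) ^ m ∂μ := by
    intro m
    rw [hg]
    simp only
    rw [← integral_const_mul]
    congr 1
    funext x
    rw [Real.div_rpow hn.le (hpos x).le, Real.rpow_neg (hpos x).le, div_eq_mul_inv]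
  have hintdiv : ∀ m : ℝ, Integrable (fun x => (n / Ndet x) ^ m) μ := by
    intro m
    have hc : Continuous fun x => (n / Ndet x) ^ m :=
      (continuous_const.div hcont fun x => (hpos x).ne').rpow_const
        (fun x => Or.inl (div_pos hn (hpos x)).ne')
    have := hc.continuousOn.integrableOn_compact (isCompact_univ (X := X)) (μ := μ)
    rwa [integrableOn_univ] at this
  constructor
  · -- n < Nmin : g m → 0
    intro hlt
    have hc1 : n / Ndet x₀ < 1 := (div_lt_one (hpos x₀)).mpr hlt
    have hc0 : 0 < n / Ndet x₀ := div_pos hn (hpos x₀)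
    have hgl : ∀ᶠ m : ℝ in atTop, g m ≤ (n / Ndet x₀) ^ m * (μ Set.univ).toReal := by
      filter_upwards [eventually_ge_atTop (0 : ℝ)] with m hm
      rw [hgeq m]
      calc ∫ x, (n / Ndet x) ^ m ∂μ
          ≤ ∫ _x, (n / Ndet x₀) ^ m ∂μ := by
            apply integral_mono (hintdiv m) (integrable_const _)
            intro x
            exact Real.rpow_le_rpow (div_pos hn (hpos x)).le
              (div_le_div_of_nonneg_left hn.le (hpos x₀) (hmin x)) hm
        _ = (n / Ndet x₀) ^ m * (μ Set.univ).toReal := by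
            rw [integral_const, smul_eq_mul, mul_comm]; rfl
    have hglb : ∀ᶠ m : ℝ in atTop, 0 ≤ g m := by
      filter_upwards with m
      rw [hgeq m]
      exact integral_nonneg fun x => Real.rpow_nonneg (div_nonneg hn.le (hpos x).le) m
    have htend0 : Tendsto g atTop (nhds 0) := by
      have hub : Tendsto (fun m : ℝ => (n / Ndet x₀) ^ m * (μ Set.univ).toReal)
          atTop (nhds 0) := by
        have := (tendsto_rpow_atTop_of_base_lt_one (n / Ndet x₀)
          (by linarith) hc1).mul_const (μ Set.univ).toReal
        simpa using this
      exact tendsto_of_tendsto_of_tendsto_of_le_of_le' tendsto_const_nhds hub hglb hgl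
    have : Tendsto (fun m => Real.exp (-(g m))) atTop (nhds 1) := by
      have h := htend0.neg
      rw [neg_zero] at h
      simpa [Function.comp_def] using (Real.continuous_exp.tendsto 0).comp h
    have := this.const_sub 1
    simpa using this
  · -- Nmin < n : g m → ∞
    intro hlt
    set b := (Ndet x₀ + n) / 2 with hb
    have hb1 : Ndet x₀ < b := by rw [hb]; linarith
    have hb2 : b < n := by rw [hb]; linarith
    have hbpos : 0 < b := lt_trans (hpos x₀) hb1
    -- find a ball where Ndet < b
    obtain ⟨ε, hε, hball⟩ : ∃ ε > 0, ∀ x ∈ Metric.ball x₀ ε, Ndet x < b := by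
      have : IsOpen (Ndet ⁻¹' Set.Iio b) := (isOpen_Iio).preimage hcont
      rcases Metric.isOpen_iff.mp this x₀ (by simpa using hb1) with ⟨ε, hε, hsub⟩
      exact ⟨ε, hε, fun x hx => hsub hx⟩
    set r := n / b with hr
    have hr1 : 1 < r := (one_lt_div hbpos).mpr hb2
    have hμb : 0 < (μ (Metric.ball x₀ ε)).toReal :=
      ENNReal.toReal_pos (hμ ε hε).ne' (measure_ne_top μ _)
    -- lower bound for g
    have hlb : ∀ᶠ m : ℝ in atTop, r ^ m * (μ (Metric.ball x₀ ε)).toReal ≤ g m := by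
      filter_upwards [eventually_ge_atTop (0 : ℝ)] with m hm
      rw [hgeq m]
      have h1 : r ^ m * (μ (Metric.ball x₀ ε)).toReal
          ≤ ∫ x in Metric.ball x₀ ε, (n / Ndet x) ^ m ∂μ := by
        apply setIntegral_ge_of_const_le_real Metric.isOpen_ball.measurableSet
          (measure_ne_top μ _)
        · intro x hx
          apply Real.rpow_le_rpow (div_nonneg hn.le hbpos.le) _ hm
          exact div_le_div_of_nonneg_left hn.le (hpos x) (hball x hx).le
        · exact (hintdiv m).integrableOn
      have h2 : ∫ x in Metric.ball x₀ ε, (n / Ndet x) ^ m ∂μ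
          ≤ ∫ x, (n / Ndet x) ^ m ∂μ := by
        apply setIntegral_le_integral (hintdiv m)
        filter_upwards with x
        exact Real.rpow_nonneg (div_nonneg hn.le (hpos x).le) m
      linarith
    have htop : Tendsto g atTop atTop := by
      apply tendsto_atTop_mono' _ hlb
      exact (aux_rpow_tendsto_atTop hr1).atTop_mul_const hμb
    have : Tendsto (fun m => Real.exp (-(g m))) atTop (nhds 0) :=
      Real.tendsto_exp_atBot.comp (tendsto_neg_atTop_atBot.comp htop)
    have := this.const_sub 1
    simpa using this
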